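/- arXiv:1310.6648 — 10 statements merged into one kernel-verified Lean document; each statement's English description precedes it below -/
import Mathlib

section
/- Let n be a positive integer and let M_{C_n} be the graph monoid of the Cayley graph C_n. Then the set of nonidentity elements of M_{C_n} forms an abelian group under the monoid addition, whose identity element is the class [𝟙] of the all-ones vector. Concretely: for every x : ZMod n → ℕ with [x] ≠ [0] one has [x] + [𝟙] = [x], and there exists y : ZMod n → ℕ with [y] ≠ [0] and [x] + [y] = [𝟙]; moreover, for all x, y with [x] ≠ [0] and [y] ≠ [0] one has [x] + [y] ≠ [0]. -/
/-- The generating relations of the graph monoid of `C_n`: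
`e_i ~ e_{i-1} + e_{i+1}` for each `i : ZMod n`. -/
def graphRel (n : ℕ) (x y : ZMod n → ℕ) : Prop :=
  ∃ i : ZMod n, x = Pi.single i 1 ∧ y = Pi.single (i - 1) 1 + Pi.single (i + 1) 1

/-- The additive congruence on the free abelian monoid `ZMod n → ℕ`
generated by the relations `e_i ~ e_{i-1} + e_{i+1}`. -/
def graphCon (n : ℕ) : AddCon (ZMod n → ℕ) :=
  addConGen (graphRel n)

/-- The graph monoid `M_{C_n}` of the Cayley graph `C_n`. -/
abbrev graphMonoid (n : ℕ) : Type :=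
  (graphCon n).Quotient

/-- The congruence class `[x]` of `x : ZMod n → ℕ` in the graph monoid `M_{C_n}`. -/
def cls (n : ℕ) (x : ZMod n → ℕ) : graphMonoid n :=
  (x : (graphCon n).Quotient)

lemma gcEq {n : ℕ} {a b : ZMod n → ℕ} (h : a = b) : graphCon n a b :=
  h ▸ (graphCon n).refl a

lemma pi_add_eq_zero {n : ℕ} (a b : ZMod n → ℕ) : a + b = 0 ↔ a = 0 ∧ b = 0 := by
  constructor
  · intro h
    constructor <;> funext i <;> have := congrFun h i <;>
      simp only [Pi.add_apply, Pi.zero_apply] at this ⊢ <;> omega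
  · rintro ⟨rfl, rfl⟩; simp

lemma cls_eq_zero_iff {n : ℕ} (x : ZMod n → ℕ) : cls n x = cls n 0 ↔ x = 0 := by
  constructor
  · intro h
    have h' : graphCon n x 0 := (AddCon.eq _).mp h
    have hle : graphCon n ≤
        { r := fun a b => (a = 0 ↔ b = 0)
          iseqv := ⟨fun _ => Iff.rfl, Iff.symm, Iff.trans⟩
          add' := by
            intro a b c d h1 h2
            show a + c = 0 ↔ b + d = 0
            rw [pi_add_eq_zero, pi_add_eq_zero]
            exact and_congr h1 h2 } := by
      apply AddCon.addConGen_le.mpr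
      rintro _ _ ⟨i, rfl, rfl⟩
      show _ = 0 ↔ _ = 0
      constructor <;> intro h
      · exfalso; have := congrFun h i; simp [Pi.single_apply] at this
      · exfalso; have := congrFun h (i - 1)
        simp [Pi.single_apply] at this
    exact (hle h').mpr rfl
  · rintro rfl; rfl

lemma single_rel {n : ℕ} (i : ZMod n) :
    graphCon n (Pi.single i 1) (Pi.single (i - 1) 1 + Pi.single (i + 1) 1) :=
  AddConGen.Rel.of _ _ ⟨i, rfl, rfl⟩

lemma expand {n : ℕ} (i : ZMod n) (k : ℕ) :
    graphCon n (Pi.single i 1)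
      (Pi.single (i - 1) 1 + ∑ j ∈ Finset.range k, Pi.single (i + (j : ZMod n)) 1
        + Pi.single (i + (k : ZMod n) + 1) 1) := by
  induction k with
  | zero => simpa using single_rel i
  | succ k ih =>
    refine (graphCon n).trans ih ?_
    refine (graphCon n).trans ((graphCon n).add ((graphCon n).refl
      (Pi.single (i - 1) 1 + ∑ j ∈ Finset.range k, Pi.single (i + (j : ZMod n)) 1))
      (single_rel (i + (k : ZMod n) + 1))) ?_
    apply gcEq
    rw [Finset.sum_range_succ]
    have h1 : i + (k : ZMod n) + 1 - 1 = i + (k : ZMod n) := by ring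
    have h2 : i + ((k : ℕ) + 1 : ℕ) + 1 = i + (k : ZMod n) + 1 + 1 := by push_cast; ring
    rw [h1, h2]
    abel

lemma sum_range_single {n : ℕ} (hn : 0 < n) (i : ZMod n) :
    ∑ j ∈ Finset.range n, (Pi.single (i + (j : ZMod n)) 1 : ZMod n → ℕ) = 1 := by
  haveI : NeZero n := ⟨hn.ne'⟩
  have key : ∑ j ∈ Finset.range n, (Pi.single (i + (j : ZMod n)) 1 : ZMod n → ℕ)
      = ∑ c : ZMod n, (Pi.single c 1 : ZMod n → ℕ) := by
    refine Finset.sum_nbij' (fun j => i + (j : ZMod n)) (fun c => (c - i).val) ?_ ?_ ?_ ?_ ?_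
    · intro a _; exact Finset.mem_univ _
    · intro c _; exact Finset.mem_range.mpr (ZMod.val_lt _)
    · intro a ha
      show ((i + (a : ZMod n)) - i).val = a
      rw [add_sub_cancel_left]
      exact ZMod.val_natCast_of_lt (Finset.mem_range.mp ha)
    · intro c _
      simp [ZMod.natCast_val, ZMod.cast_id]
    · intro a _; rfl
  rw [key]
  exact Finset.univ_sum_single (fun _ => 1 : ZMod n → ℕ)

lemma single_add_one {n : ℕ} (hn : 0 < n) (i : ZMod n) :
    graphCon n (Pi.single i 1 + 1) (Pi.single i 1) := by
  haveI : NeZero n := ⟨hn.ne'⟩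
  refine (graphCon n).trans ?_ ((graphCon n).symm (expand i (n - 1)))
  apply gcEq
  have hn1 : (n - 1 : ℕ) + 1 = n := Nat.succ_pred_eq_of_pos hn
  have hne : ((n - 1 : ℕ) : ZMod n) = -1 := by
    have h : ((n - 1 : ℕ) : ZMod n) + ((1 : ℕ) : ZMod n) = ((n : ℕ) : ZMod n) := by
      rw [← Nat.cast_add, hn1]
    rw [ZMod.natCast_self] at h
    push_cast at h
    linear_combination h
  have hidx : i + ((n - 1 : ℕ) : ZMod n) + 1 = i := by rw [hne]; ring
  have hsum : (Pi.single (i - 1) 1 : ZMod n → ℕ)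
      + ∑ j ∈ Finset.range (n - 1), (Pi.single (i + (j : ZMod n)) 1 : ZMod n → ℕ) = 1 := by
    have hlast : i + ((n - 1 : ℕ) : ZMod n) = i - 1 := by rw [hne]; ring
    have h2 : ∑ j ∈ Finset.range ((n - 1) + 1), (Pi.single (i + (j : ZMod n)) 1 : ZMod n → ℕ)
        = 1 := by rw [hn1]; exact sum_range_single hn i
    rw [Finset.sum_range_succ, hlast] at h2
    rw [← h2]; abel
  rw [hidx, hsum]
  abel

lemma cls_add' (n : ℕ) (x y : ZMod n → ℕ) : cls n x + cls n y = cls n (x + y) := rfl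

lemma add_one_eq {n : ℕ} (hn : 0 < n) (x : ZMod n → ℕ) (hx : x ≠ 0) :
    cls n (x + 1) = cls n x := by
  obtain ⟨i, hi⟩ : ∃ i, x i ≠ 0 := by
    by_contra h; push_neg at h; exact hx (funext h)
  have hdecomp : x = Pi.single i 1 + (x - Pi.single i 1) := by
    funext j
    by_cases hj : j = i
    · subst hj; simp [Pi.single_apply]; omega
    · simp [Pi.single_apply, hj]
  apply (AddCon.eq _).mpr
  rw [hdecomp]
  have h := (graphCon n).add (single_add_one hn i) ((graphCon n).refl (x - Pi.single i 1))
  refine (graphCon n).trans (gcEq (add_right_comm _ _ _)) h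

lemma const_ne_zero {n : ℕ} (hn : 0 < n) (k : ℕ) (hk : 0 < k) :
    (fun _ => k : ZMod n → ℕ) ≠ 0 := by
  haveI : NeZero n := ⟨hn.ne'⟩
  intro h
  have := congrFun h 0
  simp at this
  omega

lemma const_cls {n : ℕ} (hn : 0 < n) (k : ℕ) :
    cls n (fun _ => k + 1) = cls n 1 := by
  induction k with
  | zero => rfl
  | succ k ih =>
    have : (fun _ => k + 1 + 1 : ZMod n → ℕ) = (fun _ => k + 1) + 1 := rfl
    rw [this, add_one_eq hn _ (const_ne_zero hn (k + 1) k.succ_pos), ih]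

theorem graphMonoid_nonzero_classes_form_group (n : ℕ) (hn : 0 < n) :
    (∀ x : ZMod n → ℕ, cls n x ≠ cls n 0 → cls n x + cls n 1 = cls n x) ∧
    (∀ x : ZMod n → ℕ, cls n x ≠ cls n 0 →
      ∃ y : ZMod n → ℕ, cls n y ≠ cls n 0 ∧ cls n x + cls n y = cls n 1) ∧
    (∀ x y : ZMod n → ℕ, cls n x ≠ cls n 0 → cls n y ≠ cls n 0 →
      cls n x + cls n y ≠ cls n 0) := by
  refine ⟨?_, ?_, ?_⟩
  · intro x hx
    rw [cls_add', add_one_eq hn x (fun h => hx ((cls_eq_zero_iff x).mpr h))]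
  · intro x hx
    have hx0 : x ≠ 0 := fun h => hx ((cls_eq_zero_iff x).mpr h)
    haveI : NeZero n := ⟨hn.ne'⟩
    set m : ℕ := Finset.univ.sup x with hm
    refine ⟨fun i => m + 1 - x i, ?_, ?_⟩
    · rw [Ne, cls_eq_zero_iff]
      intro h
      have := congrFun h 0
      have hle : x 0 ≤ m := Finset.le_sup (Finset.mem_univ 0)
      simp at this
      omega
    · rw [cls_add']
      have : x + (fun i => m + 1 - x i) = (fun _ => m + 1) := by
        funext i
        have hle : x i ≤ m := Finset.le_sup (Finset.mem_univ i)
        simp [Pi.add_apply]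
        omega
      rw [this, const_cls hn m]
  · intro x y hx hy
    rw [cls_add', Ne, cls_eq_zero_iff, pi_add_eq_zero]
    rintro ⟨rfl, -⟩
    exact hx ((cls_eq_zero_iff 0).mpr rfl)
end

section
/- Let n be a positive integer. For every i ∈ ℤ/nℤ, in the cokernel group G_n one has [e_i] = -[e_{i+3}], where i+3 is computed in ℤ/nℤ. -/
open Matrix

/-- The adjacency matrix of the Cayley graph `C_n` of `ℤ/nℤ` with respect to `{1, n-1}`. -/
def cayleyAdj (n : ℕ) : Matrix (ZMod n) (ZMod n) ℤ :=
  Matrix.of fun i j => (if j = i + 1 then 1 else 0) + (if j = i - 1 then 1 else 0)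

/-- The matrix `B_n = I - A_nᵀ`. -/
def cayleyB (n : ℕ) : Matrix (ZMod n) (ZMod n) ℤ :=
  1 - (cayleyAdj n)ᵀ

/-- The image of `B_n`, viewed as a linear map by matrix-vector multiplication. -/
def imB (n : ℕ) [NeZero n] : Submodule ℤ (ZMod n → ℤ) :=
  LinearMap.range (cayleyB n).mulVecLin

/-- The cokernel group `G_n = (ZMod n → ℤ) ⧸ Im(B_n)`. -/
abbrev cayleyCoker (n : ℕ) [NeZero n] : Type :=
  (ZMod n → ℤ) ⧸ imB n

/-- The class `[e_i]` of the standard basis vector `e_i` in `G_n`. -/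
def eClass (n : ℕ) [NeZero n] (i : ZMod n) : cayleyCoker n :=
  Submodule.Quotient.mk (Pi.single i 1)

theorem eClass_eq_neg_add_three (n : ℕ) [NeZero n] (i : ZMod n) :
    eClass n i = - eClass n (i + 3) := by
  rw [eq_neg_iff_add_eq_zero]
  show Submodule.Quotient.mk _ + Submodule.Quotient.mk _ = 0
  rw [← Submodule.Quotient.mk_add, Submodule.Quotient.mk_eq_zero]
  refine ⟨-(Pi.single (i+1) 1 + Pi.single (i+2) 1), ?_⟩
  have key : ∀ k : ZMod n, (cayleyB n).mulVecLin (Pi.single k 1) = fun j => cayleyB n j k := by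
    intro k; funext j
    simp [Matrix.mulVecLin_apply, Matrix.mulVec_single]
  rw [map_neg, map_add, key, key]
  funext j
  have e1 : i + 1 + 1 = i + 2 := by ring
  have e2 : i + 1 - 1 = i := by ring
  have e3 : i + 2 + 1 = i + 3 := by ring
  have e4 : i + 2 - 1 = i + 1 := by ring
  simp only [cayleyB, cayleyAdj, Matrix.sub_apply, Matrix.one_apply, Matrix.transpose_apply,
    Matrix.of_apply, Pi.neg_apply, Pi.add_apply, Pi.single_apply, e1, e2, e3, e4]
  split_ifs <;> ring
end

section
/- Let n be a positive integer. For every i ∈ ℤ/nℤ, in the cokernel group G_n one has [e_i] = [e_{i+6}], where i+6 is computed in ℤ/nℤ. -/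
open Matrix

lemma eClass_rec (n : ℕ) [NeZero n] (j : ZMod n) :
    eClass n j = eClass n (j + 1) + eClass n (j - 1) := by
  have hmem : (Pi.single j 1 - (Pi.single (j+1) 1 + Pi.single (j-1) 1) : ZMod n → ℤ)
      ∈ imB n := by
    refine ⟨Pi.single j 1, ?_⟩
    funext i
    simp only [mulVecLin_apply, mulVec, dotProduct, Pi.single_apply, cayleyB, cayleyAdj,
      Matrix.sub_apply, Matrix.one_apply, Matrix.transpose_apply, Matrix.of_apply,
      mul_ite, mul_one, mul_zero, Finset.sum_ite_eq', Finset.mem_univ, if_true,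
      Pi.sub_apply, Pi.add_apply]
  have h := (Submodule.Quotient.eq (imB n)).2 hmem
  simpa [eClass, Submodule.Quotient.mk_add] using h

lemma eClass_add_three (n : ℕ) [NeZero n] (j : ZMod n) :
    eClass n (j + 3) = - eClass n j := by
  have h1 := eClass_rec n (j + 2)
  have h2 := eClass_rec n (j + 1)
  have e1 : j + 2 + 1 = j + 3 := by ring
  have e2 : j + 2 - 1 = j + 1 := by ring
  have e3 : j + 1 + 1 = j + 2 := by ring
  have e4 : j + 1 - 1 = j := by ring
  rw [e1, e2] at h1
  rw [e3, e4] at h2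
  -- h1 : eClass (j+2) = eClass (j+3) + eClass (j+1)
  -- h2 : eClass (j+1) = eClass (j+2) + eClass j
  have := h1
  rw [h2] at this
  -- this : eClass (j+2) = eClass (j+3) + (eClass (j+2) + eClass j)
  rw [add_left_comm] at this
  have h0 : eClass n (j + 3) + eClass n j = 0 := (left_eq_add.mp this)
  exact eq_neg_of_add_eq_zero_left h0

theorem eClass_eq_add_six (n : ℕ) [NeZero n] (i : ZMod n) :
    eClass n i = eClass n (i + 6) := by
  have h1 := eClass_add_three n i
  have h2 := eClass_add_three n (i + 3)
  have e : i + 3 + 3 = i + 6 := by ring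
  rw [e, h1] at h2
  rw [h2, neg_neg]
end

section
/- Let n and m be positive integers with n ≡ m (mod 6). Then the cokernel groups G_n and G_m are isomorphic as abelian groups. -/
open Matrix

set_option linter.unusedSectionVars false

namespace CokerAux
open AddMonoidAlgebra Polynomial

variable (n : ℕ) [NeZero n]

noncomputable def g : AddMonoidAlgebra ℤ (ZMod n) := AddMonoidAlgebra.single (1 : ZMod n) (1 : ℤ)

noncomputable def bb : AddMonoidAlgebra ℤ (ZMod n) :=
  AddMonoidAlgebra.single 0 1 - AddMonoidAlgebra.single 1 1 - AddMonoidAlgebra.single (-1) 1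

lemma mulVec_eq (v : ZMod n → ℤ) (i : ZMod n) :
    (cayleyB n).mulVec v i = v i - v (i - 1) - v (i + 1) := by
  simp only [cayleyB, cayleyAdj, Matrix.mulVec, dotProduct, Matrix.sub_apply,
    Matrix.one_apply, Matrix.transpose_apply, Matrix.of_apply, sub_mul, add_mul,
    ite_mul, one_mul, zero_mul]
  rw [Finset.sum_sub_distrib, Finset.sum_add_distrib]
  have h1 : ∀ j : ZMod n, (i = j + 1) = (i - 1 = j) := fun j => by
    apply propext; constructor <;> intro hh
    · rw [hh]; ring
    · rw [← hh]; ring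
  have h2 : ∀ j : ZMod n, (i = j - 1) = (i + 1 = j) := fun j => by
    apply propext; constructor <;> intro hh
    · rw [hh]; ring
    · rw [← hh]; ring
  simp only [h1, h2, Finset.sum_ite_eq, Finset.mem_univ, if_true]
  ring

lemma bb_mul_apply (f : AddMonoidAlgebra ℤ (ZMod n)) (i : ZMod n) :
    (bb n * f).coeff i = f.coeff i - f.coeff (i - 1) - f.coeff (i + 1) := by
  have hsub : ∀ (a b : AddMonoidAlgebra ℤ (ZMod n)) (i : ZMod n), (a - b).coeff i = a.coeff i - b.coeff i :=
    fun a b i => rfl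
  rw [bb, sub_mul, sub_mul, hsub, hsub, AddMonoidAlgebra.coeff_single_mul_apply,
    AddMonoidAlgebra.coeff_single_mul_apply, AddMonoidAlgebra.coeff_single_mul_apply]
  simp only [one_mul, neg_zero, zero_add, neg_neg]
  rw [neg_add_eq_sub, add_comm]

set_option linter.unusedSectionVars false

noncomputable def E : AddMonoidAlgebra ℤ (ZMod n) ≃ₗ[ℤ] (ZMod n → ℤ) :=
  (AddMonoidAlgebra.coeffLinearEquiv ℤ).trans (Finsupp.linearEquivFunOnFinite ℤ ℤ (ZMod n))

lemma E_apply (f : AddMonoidAlgebra ℤ (ZMod n)) (i : ZMod n) : E n f i = f.coeff i := rfl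

noncomputable def II : Ideal (AddMonoidAlgebra ℤ (ZMod n)) := Ideal.span {bb n}

lemma key_mul (c : AddMonoidAlgebra ℤ (ZMod n)) :
    E n (bb n * c) = (cayleyB n).mulVec (E n c) := by
  funext i
  rw [E_apply, bb_mul_apply, mulVec_eq]
  rfl

lemma map_eq : ((II n).restrictScalars ℤ).map (E n).toLinearMap = imB n := by
  ext v
  simp only [Submodule.mem_map, Submodule.restrictScalars_mem, II,
    Ideal.mem_span_singleton, imB, LinearMap.mem_range, Matrix.mulVecLin_apply]
  constructor
  · rintro ⟨f, ⟨c, rfl⟩, rfl⟩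
    exact ⟨E n c, (key_mul n c).symm⟩
  · rintro ⟨w, rfl⟩
    exact ⟨bb n * (E n).symm w, ⟨(E n).symm w, rfl⟩, by
      rw [LinearEquiv.coe_coe, key_mul, LinearEquiv.apply_symm_apply]⟩

noncomputable def equiv1 : ((ZMod n → ℤ) ⧸ imB n) ≃+ (AddMonoidAlgebra ℤ (ZMod n) ⧸ II n) :=
  ((Submodule.Quotient.equiv ((II n).restrictScalars ℤ) (imB n) (E n) (map_eq n)).symm.toAddEquiv).trans
    (Submodule.Quotient.restrictScalarsEquiv ℤ (II n)).toAddEquiv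

noncomputable def phi : Polynomial ℤ →ₐ[ℤ] AddMonoidAlgebra ℤ (ZMod n) :=
  Polynomial.aeval (g n)

lemma g_pow (k : ℕ) : g n ^ k = AddMonoidAlgebra.single ((k : ZMod n)) 1 := by
  rw [g, AddMonoidAlgebra.single_pow, one_pow, nsmul_eq_mul, mul_one]

lemma phi_monomial (k : ℕ) (c : ℤ) :
    phi n (Polynomial.monomial k c) = AddMonoidAlgebra.single ((k : ZMod n)) c := by
  rw [phi, Polynomial.aeval_monomial, g_pow]
  rw [show (algebraMap ℤ (AddMonoidAlgebra ℤ (ZMod n))) c = AddMonoidAlgebra.single 0 c from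
    AddMonoidAlgebra.intCast_def c, AddMonoidAlgebra.single_mul_single, zero_add, mul_one]

lemma phi_surjective : Function.Surjective (phi n) := by
  intro f
  induction f using AddMonoidAlgebra.induction with
  | zero => exact ⟨0, map_zero _⟩
  | single_add a c f _ _ ih =>
    obtain ⟨p, hp⟩ := ih
    exact ⟨Polynomial.monomial a.val c + p, by
      rw [map_add, hp, phi_monomial, ZMod.natCast_val, ZMod.cast_id]⟩

noncomputable def sigma : AddMonoidAlgebra ℤ (ZMod n) →ₗ[ℤ] Polynomial ℤ :=
  (Finsupp.lsum ℤ fun a : ZMod n => LinearMap.toSpanSingleton ℤ (Polynomial ℤ) (Polynomial.X ^ a.val)) ∘ₗ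
    (AddMonoidAlgebra.coeffLinearEquiv ℤ).toLinearMap

lemma sigma_single (a : ZMod n) (c : ℤ) :
    sigma n (AddMonoidAlgebra.single a c) = c • Polynomial.X ^ a.val := by
  rw [sigma]
  exact Finsupp.lsum_single ℤ _ a c

lemma sigma_phi (p : Polynomial ℤ) (hp : p.natDegree < n) : sigma n (phi n p) = p := by
  conv_lhs => rw [p.as_sum_range' n hp]
  rw [map_sum, map_sum]
  conv_rhs => rw [p.as_sum_range' n hp]
  refine Finset.sum_congr rfl fun k hk => ?_
  rw [phi_monomial, sigma_single, ZMod.val_cast_of_lt (Finset.mem_range.mp hk),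
    Polynomial.smul_X_eq_monomial]

open Polynomial in
lemma phi_Xn_sub_one : phi n (X ^ n - 1) = 0 := by
  have h1 : phi n ((1 : Polynomial ℤ)) = 1 := map_one _
  rw [map_sub, map_pow, show phi n X = g n from Polynomial.aeval_X _, g_pow, h1,
    ZMod.natCast_self]
  rw [show (1 : AddMonoidAlgebra ℤ (ZMod n)) = AddMonoidAlgebra.single 0 1 from rfl, sub_self]

open Polynomial in
lemma ker_phi_dvd (p : Polynomial ℤ) (hp : phi n p = 0) : (X ^ n - 1 : Polynomial ℤ) ∣ p := by
  have hmonic : (X ^ n - 1 : Polynomial ℤ).Monic := by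
    simpa using monic_X_pow_sub_C (1 : ℤ) (NeZero.ne n)
  have hdeg : ((X : Polynomial ℤ) ^ n - 1).natDegree = n := by
    simpa using natDegree_X_pow_sub_C (n := n) (r := (1 : ℤ))
  have hne : ((X : Polynomial ℤ) ^ n - 1) ≠ 1 := fun hh => NeZero.ne n (by
    rw [hh] at hdeg; simpa using hdeg.symm)
  set r := p %ₘ (X ^ n - 1) with hr
  have hrdeg : r.natDegree < n := hdeg ▸ natDegree_modByMonic_lt p hmonic hne
  have heq : r + (X ^ n - 1) * (p /ₘ (X ^ n - 1)) = p := p.modByMonic_add_div _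
  have hphir : phi n r = 0 := by
    have h2 := congrArg (phi n) heq
    rw [hp, map_add, _root_.map_mul, phi_Xn_sub_one, zero_mul, add_zero] at h2
    exact h2
  have hr0 : r = 0 := by
    have h3 := sigma_phi n r hrdeg
    rw [hphir, map_zero] at h3
    exact h3.symm
  refine ⟨p /ₘ (X ^ n - 1), ?_⟩
  conv_lhs => rw [← heq, hr0, zero_add]

open Polynomial in
noncomputable def J (n : ℕ) : Ideal (Polynomial ℤ) :=
  Ideal.span {X ^ n - 1, X ^ 2 - X + 1}

open Polynomial in
noncomputable def piQ : Polynomial ℤ →+* (AddMonoidAlgebra ℤ (ZMod n) ⧸ II n) :=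
  (Ideal.Quotient.mk (II n)).comp (phi n).toRingHom

lemma piQ_surjective : Function.Surjective (piQ n) :=
  (Ideal.Quotient.mk_surjective).comp (phi_surjective n)

open Polynomial in
lemma phi_beta : phi n (1 - X - X ^ (n - 1)) = bb n := by
  have h1 : ((n - 1 : ℕ) : ZMod n) = -1 := by
    have h2 : (1:ℕ) ≤ n := NeZero.one_le
    push_cast [Nat.cast_sub h2]
    simp
  rw [map_sub, map_sub, _root_.map_one, map_pow, show phi n X = g n from Polynomial.aeval_X _,
    g_pow, h1, bb]
  rfl

open Polynomial in
lemma phi_quad : phi n (X ^ 2 - X + 1) = bb n * (-(g n)) := by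
  have hginv : AddMonoidAlgebra.single (-1 : ZMod n) (1:ℤ) * g n = 1 := by
    rw [g, AddMonoidAlgebra.single_mul_single, neg_add_cancel, mul_one]; rfl
  rw [map_add, map_sub, map_pow, _root_.map_one,
    show phi n X = g n from Polynomial.aeval_X _, bb,
    show (AddMonoidAlgebra.single (0:ZMod n) (1:ℤ)) = 1 from rfl,
    show (AddMonoidAlgebra.single (1:ZMod n) (1:ℤ)) = g n from rfl]
  linear_combination -hginv

open Polynomial in
lemma mem_ker_iff (p : Polynomial ℤ) : p ∈ RingHom.ker (piQ n) ↔ bb n ∣ phi n p := by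
  rw [RingHom.mem_ker, piQ, RingHom.comp_apply, Ideal.Quotient.eq_zero_iff_mem, II,
    Ideal.mem_span_singleton]
  rfl

open Polynomial in
lemma beta_mem_J : (1 - X - X ^ (n - 1) : Polynomial ℤ) ∈ J n := by
  have hn1 : n - 1 + 1 = n := Nat.succ_pred_eq_of_pos (Nat.pos_of_ne_zero (NeZero.ne n))
  -- X * β = -(X^2 - X + 1) - (X^n - 1)
  have hXb : (X : Polynomial ℤ) * (1 - X - X ^ (n - 1)) =
      -(X ^ 2 - X + 1) - (X ^ n - 1) := by
    have : (X : Polynomial ℤ) * X ^ (n - 1) = X ^ n := by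
      rw [← pow_succ', hn1]
    rw [mul_sub, mul_sub, mul_one, this]; ring
  -- β = X^(n-1) * (X * β) - (X^n - 1) * β
  have hb : (1 - X - X ^ (n - 1) : Polynomial ℤ) =
      X ^ (n - 1) * ((X : Polynomial ℤ) * (1 - X - X ^ (n - 1)))
        - (X ^ n - 1) * (1 - X - X ^ (n - 1)) := by
    have : (X : Polynomial ℤ) ^ (n - 1) * X = X ^ n := by
      rw [← pow_succ, hn1]
    rw [← mul_assoc, this]; ring
  rw [hb, hXb]
  have hq : (X ^ 2 - X + 1 : Polynomial ℤ) ∈ J n :=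
    Ideal.subset_span (by simp)
  have hx : (X ^ n - 1 : Polynomial ℤ) ∈ J n :=
    Ideal.subset_span (by simp)
  exact sub_mem (Ideal.mul_mem_left _ _ (sub_mem (neg_mem hq) hx)) (Ideal.mul_mem_right _ _ hx)

open Polynomial in
lemma ker_piQ : RingHom.ker (piQ n) = J n := by
  apply le_antisymm
  · intro p hp
    rw [mem_ker_iff] at hp
    obtain ⟨c, hc⟩ := hp
    obtain ⟨q, rfl⟩ := phi_surjective n c
    have h0 : phi n (p - (1 - X - X ^ (n - 1)) * q) = 0 := by
      rw [map_sub, _root_.map_mul, phi_beta, hc, sub_self]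
    obtain ⟨s, hs⟩ := ker_phi_dvd n _ h0
    have hp' : p = (X ^ n - 1) * s + (1 - X - X ^ (n - 1)) * q := by
      rw [← hs]; ring
    rw [hp']
    exact add_mem (Ideal.mul_mem_right _ _ (Ideal.subset_span (by simp)))
      (Ideal.mul_mem_right _ _ (beta_mem_J n))
  · rw [J, Ideal.span_le]
    rintro x (rfl | rfl)
    · rw [SetLike.mem_coe, mem_ker_iff, phi_Xn_sub_one]
      exact dvd_zero _
    · rw [SetLike.mem_coe, mem_ker_iff, phi_quad]
      exact Dvd.intro _ rfl

open Polynomial in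
lemma span_pair_congr {a₁ a₂ c : Polynomial ℤ} (h : c ∣ a₁ - a₂) :
    Ideal.span {a₁, c} = Ideal.span ({a₂, c} : Set (Polynomial ℤ)) := by
  obtain ⟨d, hd⟩ := h
  apply le_antisymm <;> rw [Ideal.span_le] <;> rintro x (rfl | rfl)
  · rw [SetLike.mem_coe, Ideal.mem_span_pair]
    exact ⟨1, d, by linear_combination -hd⟩
  · exact Ideal.subset_span (by simp)
  · rw [SetLike.mem_coe, Ideal.mem_span_pair]
    exact ⟨1, -d, by linear_combination hd⟩
  · exact Ideal.subset_span (by simp)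

open Polynomial in
lemma J_eq_mod : J n = Ideal.span {X ^ (n % 6) - 1, X ^ 2 - X + 1} := by
  rw [J]
  apply span_pair_congr
  have h6 : (X ^ 2 - X + 1 : Polynomial ℤ) ∣ X ^ 6 - 1 :=
    ⟨X ^ 4 + X ^ 3 - X - 1, by ring⟩
  have hq : (X ^ 6 - 1 : Polynomial ℤ) ∣ X ^ (6 * (n / 6)) - 1 := by
    rw [pow_mul]
    simpa using sub_dvd_pow_sub_pow ((X : Polynomial ℤ) ^ 6) 1 (n / 6)
  have : (X ^ n - 1 : Polynomial ℤ) - (X ^ (n % 6) - 1) = X ^ (n % 6) * (X ^ (6 * (n / 6)) - 1) := by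
    rw [mul_sub, mul_one, ← pow_add]
    rw [show n % 6 + 6 * (n / 6) = n from by omega]
    ring
  rw [this]
  exact Dvd.dvd.mul_left (h6.trans hq) _

end CokerAux

theorem coker_iso_of_modeq_six (n m : ℕ) [NeZero n] [NeZero m]
    (h : n ≡ m [MOD 6]) :
    Nonempty (cayleyCoker n ≃+ cayleyCoker m) := by
  have hJ : CokerAux.J n = CokerAux.J m := by
    rw [CokerAux.J_eq_mod n, CokerAux.J_eq_mod m, show n % 6 = m % 6 from h]
  refine ⟨(CokerAux.equiv1 n).trans (AddEquiv.trans ?_ (CokerAux.equiv1 m).symm)⟩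
  exact ((RingHom.quotientKerEquivOfSurjective (CokerAux.piQ_surjective n)).symm.trans
    ((Ideal.quotEquivOfEq ((CokerAux.ker_piQ n).trans hJ)).trans
      ((Ideal.quotEquivOfEq (CokerAux.ker_piQ m)).symm.trans
        (RingHom.quotientKerEquivOfSurjective (CokerAux.piQ_surjective m))))).toAddEquiv
end

section
/- Let n be a positive integer with n ≡ 1 (mod 6) or n ≡ 5 (mod 6). Then the cokernel group G_n is the trivial group. -/
open Matrix

lemma key (n : ℕ) [NeZero n] (i : ZMod n) :
    eClass n (i + 1) = eClass n i - eClass n (i - 1) := by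
  have hmem : (Pi.single i 1 - (Pi.single (i+1) 1 + Pi.single (i-1) 1) : ZMod n → ℤ) ∈ imB n := by
    refine ⟨Pi.single i 1, ?_⟩
    funext r
    simp [cayleyB, cayleyAdj, Matrix.mulVecLin_apply, Matrix.mulVec, dotProduct,
      Pi.single_apply, Matrix.one_apply, sub_mul, add_mul, ite_mul,
      Finset.sum_sub_distrib, Finset.sum_ite_eq', eq_comm, sub_eq_iff_eq_add]
  have h2 : eClass n i = eClass n (i + 1) + eClass n (i - 1) := by
    rw [← sub_eq_zero]
    simpa [eClass, Submodule.Quotient.mk_sub, Submodule.Quotient.mk_add] using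
      (Submodule.Quotient.mk_eq_zero (imB n)).2 hmem
  rw [h2]; abel

lemma shift3 (n : ℕ) [NeZero n] (i : ZMod n) :
    eClass n (i + 3) = - eClass n i := by
  have k2 := key n (i + 1)
  have k3 := key n (i + 2)
  simp only [add_sub_cancel_right, show i + 1 + 1 = i + 2 by ring,
    show i + 2 + 1 = i + 3 by ring, show i + 2 - 1 = i + 1 by ring] at k2 k3
  rw [k3, k2]; abel

lemma shift6 (n : ℕ) [NeZero n] (i : ZMod n) :
    eClass n (i + 6) = eClass n i := by
  have := shift3 n (i + 3)
  rw [show i + 3 + 3 = i + 6 by ring, shift3 n i] at this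
  simpa using this

lemma shift6m (n : ℕ) [NeZero n] (i : ZMod n) (m : ℕ) :
    eClass n (i + 6 * (m : ZMod n)) = eClass n i := by
  induction m with
  | zero => simp
  | succ m ih =>
    have : i + 6 * ((m + 1 : ℕ) : ZMod n) = (i + 6 * (m : ZMod n)) + 6 := by push_cast; ring
    rw [this, shift6, ih]

theorem coker_trivial_of_one_or_five_mod_six (n : ℕ) [NeZero n]
    (h : n % 6 = 1 ∨ n % 6 = 5) :
    Subsingleton (cayleyCoker n) := by
  have h6 : Nat.Coprime 6 n := by
    rw [Nat.coprime_comm, Nat.Coprime, Nat.gcd_comm, Nat.gcd_rec]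
    rcases h with h | h <;> simp [h]
  set u := ZMod.unitOfCoprime 6 h6 with hu
  have hc : (6 : ZMod n) * ((((u⁻¹ : (ZMod n)ˣ) : ZMod n)).val : ZMod n) = 1 := by
    rw [ZMod.natCast_val, ZMod.cast_id]
    have := u.mul_inv
    simpa [hu, ZMod.coe_unitOfCoprime] using this
  have hstep : ∀ i : ZMod n, eClass n (i + 1) = eClass n i := by
    intro i
    have := shift6m n i (((u⁻¹ : (ZMod n)ˣ) : ZMod n)).val
    rwa [hc] at this
  have hzero : ∀ i : ZMod n, eClass n i = 0 := by
    intro i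
    have k := key n (i + 1)
    rw [show i + 1 - 1 = i from by ring, hstep (i + 1), hstep i] at k
    simpa using k
  rw [Submodule.Quotient.subsingleton_iff, eq_top_iff]
  intro x _
  have hx : x = ∑ i : ZMod n, x i • Pi.single i 1 := by
    funext r; simp [Pi.single_apply]
  rw [hx]
  refine Submodule.sum_mem _ fun i _ => Submodule.smul_mem _ _ ?_
  exact (Submodule.Quotient.mk_eq_zero (imB n)).1 (hzero i)
end

section
/- Let n be a positive integer divisible by 6. Then the cokernel group G_n is isomorphic to ℤ × ℤ. -/
open Matrix

def cc : ZMod 6 → ℤ × ℤ := ![(1,0),(0,1),(-1,1),(-1,0),(0,-1),(1,-1)]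
lemma cc_zero : cc 0 = (1,0) := rfl
lemma cc_one : cc 1 = (0,1) := rfl
lemma cc_step : ∀ x : ZMod 6, cc (x + 2) = cc (x + 1) - cc x := by decide
lemma cc_balance : ∀ x : ZMod 6, cc x - cc (x + 1) - cc (x - 1) = 0 := by decide

lemma mulVec_cayleyB (n : ℕ) [NeZero n] (v : ZMod n → ℤ) (i : ZMod n) :
    (cayleyB n).mulVec v i = v i - v (i - 1) - v (i + 1) := by
  classical
  have h1 : ∀ j : ZMod n, (i = j + 1) ↔ (j = i - 1) := by
    intro j; rw [← sub_eq_iff_eq_add, eq_comm]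
  have h2 : ∀ j : ZMod n, (i = j - 1) ↔ (j = i + 1) := by
    intro j; rw [eq_sub_iff_add_eq, eq_comm]
  simp only [cayleyB, cayleyAdj, Matrix.mulVec, dotProduct, Matrix.sub_apply,
    Matrix.transpose_apply, Matrix.of_apply, Matrix.one_apply, sub_mul, add_mul,
    ite_mul, one_mul, zero_mul, Finset.sum_sub_distrib, Finset.sum_add_distrib, h1, h2,
    Finset.sum_ite_eq,
    Finset.sum_ite_eq', Finset.mem_univ, if_true]
  rw [show i - 1 = -1 + i by ring, show i + 1 = 1 + i by ring]
  ring

lemma eClass_rel (n : ℕ) [NeZero n] (j : ZMod n) :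
    eClass n (j + 1) = eClass n j - eClass n (j - 1) := by
  have hmem : (Pi.single j 1 - Pi.single (j + 1) 1 - Pi.single (j - 1) 1 : ZMod n → ℤ)
      ∈ imB n := by
    refine ⟨Pi.single j 1, ?_⟩
    funext i
    rw [Matrix.mulVecLin_apply, mulVec_cayleyB]
    have h1 : (i - 1 = j) ↔ (i = j + 1) := sub_eq_iff_eq_add
    have h2 : (i + 1 = j) ↔ (i = j - 1) := by rw [eq_sub_iff_add_eq]
    simp [Pi.single_apply, h1, h2]
  have h0 : Submodule.Quotient.mk (p := imB n) (Pi.single j 1)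
      - Submodule.Quotient.mk (Pi.single (j + 1) 1)
      - Submodule.Quotient.mk (Pi.single (j - 1) 1) = 0 := by
    rw [← Submodule.Quotient.mk_sub, ← Submodule.Quotient.mk_sub]
    exact (Submodule.Quotient.mk_eq_zero _).2 hmem
  unfold eClass
  have := sub_eq_zero.mp h0
  rw [sub_eq_iff_eq_add] at h0
  linear_combination (norm := abel) - h0

def phi (n : ℕ) [NeZero n] (h : 6 ∣ n) : (ZMod n → ℤ) →ₗ[ℤ] ℤ × ℤ where
  toFun v := ∑ i, v i • cc (ZMod.castHom h (ZMod 6) i)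
  map_add' x y := by simp [add_smul, Finset.sum_add_distrib]
  map_smul' a x := by simp [mul_smul, Finset.smul_sum]

lemma phi_single (n : ℕ) [NeZero n] (h : 6 ∣ n) (i : ZMod n) :
    phi n h (Pi.single i 1) = cc (ZMod.castHom h (ZMod 6) i) := by
  simp [phi, Pi.single_apply, ite_smul]

lemma phi_ker (n : ℕ) [NeZero n] (h : 6 ∣ n) : imB n ≤ LinearMap.ker (phi n h) := by
  rintro _ ⟨v, rfl⟩
  set f := ZMod.castHom h (ZMod 6)
  have key : ∀ i : ZMod n, ((cayleyB n).mulVecLin v) i • cc (f i)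
      = v i • cc (f i) - v (i - 1) • cc (f i) - v (i + 1) • cc (f i) := by
    intro i
    rw [Matrix.mulVecLin_apply, mulVec_cayleyB, sub_smul, sub_smul]
  simp only [LinearMap.mem_ker, phi, LinearMap.coe_mk, AddHom.coe_mk]
  rw [Finset.sum_congr rfl fun i _ => key i]
  rw [Finset.sum_sub_distrib, Finset.sum_sub_distrib]
  have e1 : ∑ i : ZMod n, v (i - 1) • cc (f i)
      = ∑ i : ZMod n, v i • cc (f i + 1) := by
    refine Fintype.sum_equiv (Equiv.subRight 1) _ _ fun i => ?_
    have : f (i - 1) + 1 = f i := by rw [map_sub, f.map_one, sub_add_cancel]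
    simp only [Equiv.subRight_apply, this]
  have e2 : ∑ i : ZMod n, v (i + 1) • cc (f i)
      = ∑ i : ZMod n, v i • cc (f i - 1) := by
    refine Fintype.sum_equiv (Equiv.addRight 1) _ _ fun i => ?_
    have : f (i + 1) - 1 = f i := by rw [map_add, f.map_one, add_sub_cancel_right]
    simp only [Equiv.coe_addRight, this]
  rw [e1, e2, ← Finset.sum_sub_distrib, ← Finset.sum_sub_distrib]
  refine Finset.sum_eq_zero fun i _ => ?_
  rw [← smul_sub, ← smul_sub, cc_balance, smul_zero]

lemma eClass_nat (n : ℕ) [NeZero n] (k : ℕ) :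
    eClass n (k : ZMod n) = (cc (k : ZMod 6)).1 • eClass n 0 + (cc (k : ZMod 6)).2 • eClass n 1 := by
  induction k using Nat.strong_induction_on with
  | _ k ih =>
    match k with
    | 0 => simp [cc_zero]
    | 1 => simp [cc_one]
    | (k + 2) =>
      have h1 := ih (k + 1) (by omega)
      have h0 := ih k (by omega)
      have hrel := eClass_rel n ((k : ZMod n) + 1)
      have hc : (((k : ℕ) + 2 : ℕ) : ZMod n) = ((k : ZMod n) + 1) + 1 := by push_cast; ring
      have hc1 : (((k : ℕ) + 1 : ℕ) : ZMod n) = (k : ZMod n) + 1 := by push_cast; ring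
      have hc6 : (((k : ℕ) + 2 : ℕ) : ZMod 6) = ((k : ZMod 6)) + 2 := by push_cast; ring
      have hc61 : (((k : ℕ) + 1 : ℕ) : ZMod 6) = ((k : ZMod 6)) + 1 := by push_cast; ring
      rw [hc, hrel, add_sub_cancel_right, ← hc1, h1, h0, hc6, hc61, cc_step]
      rw [Prod.fst_sub, Prod.snd_sub, sub_smul, sub_smul]
      abel

lemma eClass_eq (n : ℕ) [NeZero n] (h : 6 ∣ n) (i : ZMod n) :
    eClass n i = (cc (ZMod.castHom h (ZMod 6) i)).1 • eClass n 0
      + (cc (ZMod.castHom h (ZMod 6) i)).2 • eClass n 1 := by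
  have hv : ((i.val : ℕ) : ZMod n) = i := ZMod.natCast_rightInverse i
  have hf : ZMod.castHom h (ZMod 6) i = ((i.val : ℕ) : ZMod 6) := by
    conv_lhs => rw [← hv]
    exact map_natCast _ _
  rw [hf]
  have := eClass_nat n i.val
  rwa [hv] at this

def psi (n : ℕ) [NeZero n] : ℤ × ℤ →ₗ[ℤ] cayleyCoker n :=
  LinearMap.coprod (LinearMap.toSpanSingleton ℤ _ (eClass n 0))
    (LinearMap.toSpanSingleton ℤ _ (eClass n 1))

theorem coker_int_sq_of_six_dvd (n : ℕ) [NeZero n]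
    (h : 6 ∣ n) :
    Nonempty (cayleyCoker n ≃+ (ℤ × ℤ)) := by
  set f := ZMod.castHom h (ZMod 6)
  let bar : cayleyCoker n →ₗ[ℤ] ℤ × ℤ := Submodule.liftQ (imB n) (phi n h) (phi_ker n h)
  have bar_mk : ∀ v, bar (Submodule.Quotient.mk v) = phi n h v := fun v => rfl
  have left : ∀ x : cayleyCoker n, psi n (bar x) = x := by
    intro x
    obtain ⟨v, rfl⟩ := Submodule.Quotient.mk_surjective _ x
    rw [bar_mk]
    show psi n (∑ i, v i • cc (f i)) = _
    rw [map_sum]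
    have : ∀ i : ZMod n, psi n (v i • cc (f i)) = v i • eClass n i := by
      intro i
      rw [LinearMap.map_smul, eClass_eq n h i]
      simp [psi, LinearMap.toSpanSingleton_apply, ZMod.castHom_apply, f]
    rw [Finset.sum_congr rfl fun i _ => this i]
    have hv : v = ∑ i, v i • (Pi.single i 1 : ZMod n → ℤ) := by
      ext j; simp [Pi.single_apply]
    have step : ∀ i : ZMod n, v i • eClass n i
        = Submodule.mkQ (imB n) (v i • Pi.single i 1) := by
      intro i; rw [(imB n).mkQ.map_smul]; rfl
    rw [Finset.sum_congr rfl fun i _ => step i, ← map_sum, ← hv]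
    rfl
  have right : ∀ p : ℤ × ℤ, bar (psi n p) = p := by
    rintro ⟨a, b⟩
    have h0 : bar (eClass n 0) = (1, 0) := by
      rw [eClass, bar_mk, phi_single]
      rw [map_zero, cc_zero]
    have h1 : bar (eClass n 1) = (0, 1) := by
      rw [eClass, bar_mk, phi_single]
      rw [RingHom.map_one, cc_one]
    simp [psi, LinearMap.toSpanSingleton_apply, h0, h1, Prod.ext_iff]
  exact ⟨AddEquiv.mk' ⟨bar, psi n, left, right⟩ bar.map_add⟩
end

section
/- Let n be a positive integer. In the graph monoid M_{C_n}, the class of the all-ones vector is idempotent: [𝟙 + 𝟙] = [𝟙], i.e., the congruence generated by the relations e_i ~ e_{i-1} + e_{i+1} relates 𝟙 + 𝟙 to 𝟙. (Equivalently, the element ∑_{i=1}^n [v_i] is the identity element of the group of nonidentity elements of M_{C_n}.) -/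
theorem cls_allOnes_idempotent (n : ℕ) (hn : 0 < n) :
    cls n (1 + 1) = cls n 1 := by
  haveI : NeZero n := ⟨hn.ne'⟩
  have hadd : ∀ x y : ZMod n → ℕ, cls n (x + y) = cls n x + cls n y := fun x y => rfl
  have hcls : ∀ {x y : ZMod n → ℕ}, graphCon n x y → cls n x = cls n y :=
    fun h => Quotient.sound h
  have h1 : (1 : ZMod n → ℕ) = ∑ i : ZMod n, Pi.single i 1 := by
    funext j
    simp [Finset.sum_apply, Pi.single_apply]
  have hsum : ∀ f : ZMod n → (ZMod n → ℕ),
      cls n (∑ i : ZMod n, f i) = ∑ i : ZMod n, cls n (f i) := by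
    intro f
    exact map_sum (AddCon.mk' (graphCon n)) f Finset.univ
  have key : ∀ i : ZMod n,
      cls n (Pi.single i 1) = cls n (Pi.single (i - 1) 1) + cls n (Pi.single (i + 1) 1) := by
    intro i
    rw [← hadd]
    exact hcls (AddConGen.Rel.of _ _ ⟨i, rfl, rfl⟩)
  have hone : cls n 1 = ∑ i : ZMod n, cls n (Pi.single i 1) := by
    rw [h1, hsum]
  have hshift : ∀ c : ZMod n,
      (∑ i : ZMod n, cls n (Pi.single (i + c) 1)) = ∑ i : ZMod n, cls n (Pi.single i 1) := by
    intro c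
    exact Fintype.sum_equiv (Equiv.addRight c) _ _ (fun i => rfl)
  calc cls n (1 + 1) = cls n 1 + cls n 1 := hadd 1 1
    _ = (∑ i : ZMod n, cls n (Pi.single (i + (-1)) 1))
        + ∑ i : ZMod n, cls n (Pi.single (i + 1) 1) := by rw [hshift, hshift, hone]
    _ = ∑ i : ZMod n, (cls n (Pi.single (i - 1) 1) + cls n (Pi.single (i + 1) 1)) := by
        rw [← Finset.sum_add_distrib]
        simp [sub_eq_add_neg]
    _ = ∑ i : ZMod n, cls n (Pi.single i 1) := by
        exact Finset.sum_congr rfl fun i _ => (key i).symm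
    _ = cls n 1 := hone.symm
end

section
/- Let n be a positive integer. Then det(1 - A_nᵀ) ≤ 0, where the determinant is taken over the integers. -/
open Matrix

open Equiv Complex in
/-- A primitive sixth root of unity in `ℂ`. -/
noncomputable def zet : ℂ := ⟨1/2, Real.sqrt 3 / 2⟩

lemma zet_add : zet + (starRingEnd ℂ) zet = 1 := by
  simp [zet, Complex.ext_iff]; ring

lemma zet_mul : zet * (starRingEnd ℂ) zet = 1 := by
  have h3 : Real.sqrt 3 * Real.sqrt 3 = 3 := Real.mul_self_sqrt (by norm_num)
  simp [zet, Complex.ext_iff, Complex.mul_re, Complex.mul_im]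
  constructor <;> nlinarith [h3]

section aux
open Equiv Complex
variable (n : ℕ) [NeZero n]

set_option linter.unusedSectionVars false

/-- The permutation matrix of `x ↦ x + 1` on `ZMod n`, over `ℂ`. -/
noncomputable def Pm : Matrix (ZMod n) (ZMod n) ℂ := (Equiv.addRight (1 : ZMod n)).permMatrix ℂ

/-- The permutation matrix of `x ↦ x - 1` on `ZMod n`, over `ℂ`. -/
noncomputable def Qm : Matrix (ZMod n) (ZMod n) ℂ := (Equiv.addRight (1 : ZMod n))⁻¹.permMatrix ℂ

lemma Pm_apply (i j : ZMod n) : Pm n i j = if j = i + 1 then 1 else 0 := by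
  simp [Pm, Equiv.Perm.permMatrix, PEquiv.toMatrix_apply, Equiv.toPEquiv, eq_comm]

lemma Qm_apply (i j : ZMod n) : Qm n i j = if j = i - 1 then 1 else 0 := by
  simp [Qm, Equiv.Perm.permMatrix, PEquiv.toMatrix_apply, Equiv.toPEquiv, Equiv.Perm.inv_def,
    eq_comm, sub_eq_add_neg]

lemma QP : Qm n * Pm n = 1 := by
  rw [Pm, Qm, Equiv.Perm.permMatrix, Equiv.Perm.permMatrix, ← PEquiv.toMatrix_trans,
    ← Equiv.toPEquiv_trans]
  have : ((Equiv.addRight (1 : ZMod n))⁻¹ : Perm (ZMod n)).trans (Equiv.addRight (1 : ZMod n))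
      = Equiv.refl (ZMod n) := by
    ext x; simp
  rw [this]
  simp [Equiv.toPEquiv_refl]

lemma mapM : (1 - (cayleyAdj n)ᵀ).map (Int.cast : ℤ → ℂ) = 1 - Pm n - Qm n := by
  ext i j
  simp only [Matrix.map_apply, Matrix.sub_apply, Matrix.one_apply, Matrix.transpose_apply,
    cayleyAdj, Matrix.of_apply, Pm_apply, Qm_apply]
  have h1 : i = j + 1 ↔ j = i - 1 := by constructor <;> intro h <;> simp [h]
  have h2 : i = j - 1 ↔ j = i + 1 := by constructor <;> intro h <;> simp [h]
  simp only [h1, h2]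
  split_ifs <;> push_cast <;> ring

lemma factored :
    (1 - Pm n - Qm n) * Pm n
      = -((Pm n - zet • 1) * (Pm n - (starRingEnd ℂ) zet • 1)) := by
  have hQP := QP n
  have expand : (Pm n - zet • 1) * (Pm n - (starRingEnd ℂ) zet • 1)
      = Pm n * Pm n - (zet + (starRingEnd ℂ) zet) • Pm n
        + (zet * (starRingEnd ℂ) zet) • 1 := by
    rw [sub_mul, mul_sub, mul_sub, add_smul, smul_mul_assoc, smul_mul_assoc, mul_smul_comm]
    simp only [Matrix.mul_one, Matrix.one_mul, smul_smul]
    abel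
  rw [expand, zet_add, zet_mul, one_smul, one_smul, sub_mul, sub_mul, Matrix.one_mul, hQP]
  abel

lemma conj_det : (Matrix.det (Pm n - (starRingEnd ℂ) zet • 1))
    = (starRingEnd ℂ) (Matrix.det (Pm n - zet • 1)) := by
  rw [RingHom.map_det]
  congr 1
  ext i j
  simp only [RingHom.mapMatrix_apply, Matrix.map_apply, Matrix.sub_apply, Matrix.smul_apply,
    Pm_apply, Matrix.one_apply, smul_eq_mul, map_sub, _root_.map_mul]
  split_ifs <;> simp

lemma sign_addRight : Equiv.Perm.sign (Equiv.addRight (1 : ZMod n)) = (-1) ^ (n - 1) := by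
  rcases n with _ | _ | m
  · exact absurd rfl (NeZero.ne 0)
  · have : (Equiv.addRight (1 : ZMod 1)) = 1 := by
      ext x; exact Subsingleton.elim _ _
    simp [this]
  · set σ := Equiv.addRight (1 : ZMod (m + 2)) with hσ
    have hmove : ∀ y : ZMod (m+2), σ y ≠ y := by
      intro y
      simp only [hσ, Equiv.coe_addRight, ne_eq, add_eq_left]
      haveI : Fact (1 < m + 2) := ⟨by omega⟩
      exact one_ne_zero
    have hc : σ.IsCycle := by
      refine ⟨0, hmove 0, fun y _ => ?_⟩
      refine ⟨(y.val : ℤ), ?_⟩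
      rw [zpow_natCast, hσ, (show ∀ k : ℕ, Equiv.addRight (1 : ZMod (m+2)) ^ k = Equiv.addRight (k • (1 : ZMod (m+2))) from fun k => by
        induction k with
        | zero => ext x; simp
        | succ k ih =>
          rw [pow_succ, ih]; ext x; simp only [Perm.mul_apply, Equiv.coe_addRight, succ_nsmul]; abel)]
      show (0 : ZMod (m+2)) + y.val • (1 : ZMod (m+2)) = y
      simp [ZMod.natCast_val, ZMod.cast_id]
    have hsupp : σ.support = Finset.univ := by
      ext y; simp [Equiv.Perm.mem_support, hmove y]
    have hcard : σ.support.card = m + 2 := by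
      rw [hsupp, Finset.card_univ, ZMod.card]
    rw [hc.sign, hcard]
    simp [pow_succ]

lemma detPm : Matrix.det (Pm n) = ((-1 : ℂ)) ^ (n - 1) := by
  rw [Pm, Matrix.det_permutation, sign_addRight]
  push_cast
  rfl

end aux

open Complex in
theorem det_one_sub_adj_transpose_nonpos (n : ℕ) [NeZero n] :
    (1 - (cayleyAdj n)ᵀ).det ≤ 0 := by
  set D : ℤ := (1 - (cayleyAdj n)ᵀ).det with hD
  set z : ℂ := Matrix.det (Pm n - zet • 1) with hz
  have hcast : (D : ℂ) = Matrix.det (1 - Pm n - Qm n) := by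
    have h := RingHom.map_det (Int.castRingHom ℂ) (1 - (cayleyAdj n)ᵀ)
    rw [RingHom.mapMatrix_apply, Int.coe_castRingHom, mapM n] at h
    exact h
  have hmul : Matrix.det (1 - Pm n - Qm n) * Matrix.det (Pm n)
      = (-1 : ℂ) ^ n * (z * (starRingEnd ℂ) z) := by
    rw [← Matrix.det_mul, factored n, Matrix.det_neg, Matrix.det_mul, ← hz, ← conj_det n]
    rw [ZMod.card]
  have hεε : ((-1 : ℂ)) ^ n * ((-1 : ℂ)) ^ (n - 1) = -1 := by
    obtain ⟨m, rfl⟩ : ∃ m, n = m + 1 := ⟨n - 1, (Nat.succ_pred_eq_of_pos (NeZero.pos n)).symm⟩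
    have h1 : ((-1:ℂ))^m * (-1)^m = 1 := by
      rw [← pow_add, ← two_mul, pow_mul]; norm_num
    simp only [Nat.add_sub_cancel, pow_succ]
    calc ((-1:ℂ))^m * -1 * (-1)^m = ((-1:ℂ)^m * (-1)^m) * -1 := by ring
      _ = -1 := by rw [h1, one_mul]
  have key : (D : ℂ) = -(Complex.normSq z : ℝ) := by
    have h1 : (D : ℂ) * Matrix.det (Pm n) = (-1 : ℂ) ^ n * (z * (starRingEnd ℂ) z) := by
      rw [hcast]; exact hmul
    rw [detPm] at h1
    have hε2 : ((-1 : ℂ)) ^ (n-1) * ((-1 : ℂ)) ^ (n-1) = 1 := by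
      rw [← pow_add, ← two_mul, pow_mul]; norm_num
    calc (D : ℂ) = (D : ℂ) * (((-1 : ℂ)) ^ (n-1) * ((-1 : ℂ)) ^ (n-1)) := by rw [hε2, mul_one]
      _ = ((D : ℂ) * ((-1 : ℂ)) ^ (n-1)) * ((-1 : ℂ)) ^ (n-1) := by ring
      _ = ((-1 : ℂ) ^ n * (z * (starRingEnd ℂ) z)) * ((-1 : ℂ)) ^ (n-1) := by rw [h1]
      _ = ((-1 : ℂ) ^ n * ((-1 : ℂ)) ^ (n-1)) * (z * (starRingEnd ℂ) z) := by ring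
      _ = -(z * (starRingEnd ℂ) z) := by rw [hεε]; ring
      _ = -(Complex.normSq z : ℝ) := by rw [Complex.mul_conj]
  have hre : (D : ℝ) = -(Complex.normSq z) := by
    exact_mod_cast key
  have : (D : ℝ) ≤ 0 := by rw [hre]; simp [Complex.normSq_nonneg]
  exact_mod_cast this
end

section
/- Let n be a positive integer. Then det(1 - A_nᵀ) = 0 if and only if 6 divides n. -/
open Matrix

lemma cayleyB_mulVec {n : ℕ} [NeZero n] (v : ZMod n → ℚ) (i : ZMod n) :
    ((cayleyB n).map ((↑) : ℤ → ℚ)).mulVec v i = v i - (v (i-1) + v (i+1)) := by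
  have h1 : ∀ j : ZMod n, (i = j + 1) = (j = i - 1) := by
    intro j
    rw [eq_comm (a := i), eq_sub_iff_add_eq]
  have h2 : ∀ j : ZMod n, (i = j - 1) = (j = i + 1) := by
    intro j
    rw [eq_comm (a := i), sub_eq_iff_eq_add]
  simp only [cayleyB, cayleyAdj, Matrix.mulVec, dotProduct, Matrix.map_apply,
    Matrix.sub_apply, Matrix.transpose_apply, Matrix.one_apply, Matrix.of_apply,
    Int.cast_sub, Int.cast_add, Int.cast_ite, Int.cast_one, Int.cast_zero,
    h1, h2, sub_mul, add_mul, ite_mul, one_mul, zero_mul]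
  rw [Finset.sum_sub_distrib, Finset.sum_add_distrib]
  simp [Finset.sum_ite_eq']

def patZ : ZMod 6 → ℤ := ![0, 1, 1, 0, -1, -1]
def pat : ZMod 6 → ℚ := fun j => (patZ j : ℚ)

lemma key_s12 (n : ℕ) [NeZero n] :
    (cayleyB n).det = 0 ↔ ∃ v : ZMod n → ℚ, v ≠ 0 ∧ ∀ i, v i = v (i-1) + v (i+1) := by
  have hmap : ((cayleyB n).map ((↑) : ℤ → ℚ)).det = ((cayleyB n).det : ℚ) :=
    (RingHom.map_det (Int.castRingHom ℚ) (cayleyB n)).symm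
  rw [show ((cayleyB n).det = 0) ↔ (((cayleyB n).det : ℚ) = 0) by exact_mod_cast Iff.rfl,
    ← hmap, ← Matrix.exists_mulVec_eq_zero_iff]
  constructor
  · rintro ⟨v, hv, hEq⟩
    refine ⟨v, hv, fun i => ?_⟩
    have := congrFun hEq i
    rw [cayleyB_mulVec] at this
    simp only [Pi.zero_apply] at this
    linarith
  · rintro ⟨v, hv, hEq⟩
    refine ⟨v, hv, funext fun i => ?_⟩
    rw [cayleyB_mulVec]
    simp only [Pi.zero_apply]
    have := hEq i
    linarith

theorem det_one_sub_adj_transpose_eq_zero_iff (n : ℕ) [NeZero n] :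
    (1 - (cayleyAdj n)ᵀ).det = 0 ↔ 6 ∣ n := by
  rw [show (1 - (cayleyAdj n)ᵀ) = cayleyB n from rfl, key_s12]
  constructor
  · rintro ⟨v, hv, hEq⟩
    by_contra h6
    apply hv
    set w : ℕ → ℚ := fun k => v (k : ZMod n) with hw
    have hrec : ∀ k : ℕ, w (k+2) = w (k+1) - w k := by
      intro k
      have := hEq ((k+1 : ℕ) : ZMod n)
      push_cast at this ⊢
      simp only [hw]
      rw [show ((k:ZMod n) + 1 - 1) = (k : ZMod n) by ring, show ((k:ZMod n) + 1 + 1) = (k:ZMod n) + 2 by ring] at this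
      push_cast
      linarith [this]
    have h3 : ∀ k : ℕ, w (k+3) = - w k := by
      intro k
      have a := hrec k
      have b := hrec (k+1)
      rw [show k+1+2 = k+3 by ring, show k+1+1 = k+2 by ring] at b
      linarith
    have h6p : ∀ k : ℕ, w (k+6) = w k := by
      intro k
      have a := h3 k
      have b := h3 (k+3)
      rw [show k+3+3 = k+6 by ring] at b
      linarith
    have h6m : ∀ m k : ℕ, w (k + 6*m) = w k := by
      intro m
      induction m with
      | zero => simp
      | succ m ih =>
        intro k
        rw [show k + 6*(m+1) = (k + 6*m) + 6 by ring, h6p, ih]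
    have hnp : ∀ k : ℕ, w (k + n) = w k := by
      intro k
      simp only [hw]
      push_cast
      simp [ZMod.natCast_self]
    -- period r = n % 6
    have hr : ∀ k : ℕ, w (k + n % 6) = w k := by
      intro k
      have : w (k + n % 6 + 6 * (n / 6)) = w (k + n % 6) := h6m _ _
      rw [show k + n % 6 + 6 * (n / 6) = k + n by rw [Nat.add_assoc]; congr 1; omega] at this
      rw [← this, hnp]
    have hzero : ∀ k : ℕ, w k = 0 := by
      have hrlt : n % 6 < 6 := Nat.mod_lt _ (by norm_num)
      have hrne : n % 6 ≠ 0 := fun h => h6 (Nat.dvd_of_mod_eq_zero h)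
      -- reduce to period 1, 2, or 3
      have case1 : (∀ k : ℕ, w (k+1) = w k) → ∀ k, w k = 0 := by
        intro hp k
        have a := hrec k
        have b := hp k
        have c := hp (k+1)
        rw [show k+1+1 = k+2 by ring] at c
        linarith
      have case2 : (∀ k : ℕ, w (k+2) = w k) → ∀ k, w k = 0 := by
        intro hp
        have hdouble : ∀ k, w (k+1) = 2 * w k := by
          intro k
          have a := hrec k
          have b := hp k
          linarith
        intro k
        have a := hdouble k
        have b := hdouble (k+1)
        rw [show k+1+1 = k+2 by ring] at b
        have c := hp k
        linarith
      have case3 : (∀ k : ℕ, w (k+3) = w k) → ∀ k, w k = 0 := by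
        intro hp k
        have a := h3 k
        have b := hp k
        linarith
      interval_cases h : (n % 6)
      · exact absurd rfl hrne
      · exact case1 hr
      · exact case2 hr
      · exact case3 hr
      · -- r = 4 : period 2
        apply case2
        intro k
        have a := hr (k+2)
        rw [show k+2+4 = k+6 by ring] at a
        rw [← a, h6p]
      · -- r = 5 : period 1
        apply case1
        intro k
        have a := hr (k+1)
        rw [show k+1+5 = k+6 by ring] at a
        rw [← a, h6p]
    funext i
    have : v ((i.val : ℕ) : ZMod n) = 0 := hzero i.val
    simpa [ZMod.natCast_val, ZMod.cast_id] using this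
  · intro h6
    refine ⟨fun i => pat (ZMod.castHom h6 (ZMod 6) i), ?_, ?_⟩
    · intro h
      have := congrFun h 1
      simp only [Pi.zero_apply, _root_.map_one] at this
      rw [show pat 1 = 1 by norm_num [pat, show patZ 1 = 1 from rfl]] at this
      exact one_ne_zero this
    · intro i
      have hgen : ∀ j : ZMod 6, pat j = pat (j - 1) + pat (j + 1) := by
        intro j
        have : patZ j = patZ (j - 1) + patZ (j + 1) := by revert j; decide
        simp only [pat]
        exact_mod_cast this
      simp only [map_sub, map_add, _root_.map_one]
      exact hgen _
end

section
/- The graph monoid M_{C_3} has exactly five elements, namely the classes [0], [e_0], [e_1], [e_2], and [e_0 + e_1 + e_2], and these five classes are pairwise distinct. -/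
def Dcon : AddCon (ZMod 3 → ℕ) where
  r x y := ((x 0 + x 2 : ℕ) : ZMod 2) = ((y 0 + y 2 : ℕ) : ZMod 2) ∧
           ((x 1 + x 2 : ℕ) : ZMod 2) = ((y 1 + y 2 : ℕ) : ZMod 2) ∧ (x = 0 ↔ y = 0)
  iseqv := ⟨fun _ => ⟨rfl, rfl, Iff.rfl⟩, fun h => ⟨h.1.symm, h.2.1.symm, h.2.2.symm⟩,
    fun h1 h2 => ⟨h1.1.trans h2.1, h1.2.1.trans h2.2.1, h1.2.2.trans h2.2.2⟩⟩
  add' := by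
    rintro w x y z ⟨h1, h2, h3⟩ ⟨g1, g2, g3⟩
    refine ⟨?_, ?_, ?_⟩
    · simp only [Pi.add_apply]; push_cast at *; linear_combination h1 + g1
    · simp only [Pi.add_apply]; push_cast at *; linear_combination h2 + g2
    · rw [add_eq_zero, add_eq_zero]; tauto

example : True := trivial

lemma graphCon_le_Dcon : graphCon 3 ≤ Dcon := by
  apply AddCon.addConGen_le.mpr
  rintro x y ⟨i, rfl, rfl⟩
  fin_cases i <;>
    refine ⟨?_, ?_, ?_⟩ <;>
    simp [Pi.single_apply] <;> decide

lemma rel_single (i : ZMod 3) :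
    cls 3 (Pi.single i 1) = cls 3 (Pi.single (i - 1) 1) + cls 3 (Pi.single (i + 1) 1) :=
  (AddCon.eq _).mpr (AddConGen.Rel.of _ _ ⟨i, rfl, rfl⟩)

noncomputable section
local notation "A" => cls 3 (Pi.single (0 : ZMod 3) 1)
local notation "B" => cls 3 (Pi.single (1 : ZMod 3) 1)
local notation "C" => cls 3 (Pi.single (2 : ZMod 3) 1)

lemma hA : A = C + B := by
  have h := rel_single 0
  have e1 : ((0 : ZMod 3) - 1) = 2 := by decide
  have e2 : ((0 : ZMod 3) + 1) = 1 := by decide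
  rw [e1, e2] at h
  exact h

lemma hB : B = A + C := by
  have h := rel_single 1
  have e1 : ((1 : ZMod 3) - 1) = 0 := by decide
  have e2 : ((1 : ZMod 3) + 1) = 2 := by decide
  rw [e1, e2] at h; exact h

lemma hC : C = B + A := by
  have h := rel_single 2
  have e1 : ((2 : ZMod 3) - 1) = 1 := by decide
  have e2 : ((2 : ZMod 3) + 1) = 0 := by decide
  rw [e1, e2] at h; exact h

lemma hAB : A + B = C := by rw [hC, add_comm]
lemma hBC : B + C = A := by rw [hA, add_comm]
lemma hAC : A + C = B := hB.symm

def IsFive (z : graphMonoid 3) : Prop :=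
  z = cls 3 0 ∨ z = A ∨ z = B ∨ z = C ∨ z = A + B + C

lemma stepA {z : graphMonoid 3} (h : IsFive z) : IsFive (z + A) := by
  rcases h with h | h | h | h | h <;> subst h
  · right; left
    show cls 3 (0 + Pi.single 0 1) = A
    rw [zero_add]
  · right; right; right; right
    calc A + A = A + (B + C) := by rw [hBC]
    _ = A + B + C := by rw [add_assoc]
  · right; right; right; left; rw [add_comm, hAB]
  · right; right; left; rw [add_comm, hAC]
  · right; left
    calc A + B + C + A = (A + B) + (A + C) := by abel
    _ = C + B := by rw [hAB, hAC]
    _ = A := by rw [add_comm, hBC]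

lemma stepB {z : graphMonoid 3} (h : IsFive z) : IsFive (z + B) := by
  rcases h with h | h | h | h | h <;> subst h
  · right; right; left
    show cls 3 (0 + Pi.single 1 1) = B
    rw [zero_add]
  · right; right; right; left; rw [hAB]
  · right; right; right; right
    calc B + B = B + (A + C) := by rw [hAC]
    _ = A + B + C := by abel
  · right; left; rw [add_comm, hBC]
  · right; right; left
    calc A + B + C + B = (A + B) + (B + C) := by abel
    _ = C + A := by rw [hAB, hBC]
    _ = B := by rw [add_comm, hAC]

lemma stepC {z : graphMonoid 3} (h : IsFive z) : IsFive (z + C) := by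
  rcases h with h | h | h | h | h <;> subst h
  · right; right; right; left
    show cls 3 (0 + Pi.single 2 1) = C
    rw [zero_add]
  · right; right; left; rw [hAC]
  · right; left; rw [hBC]
  · right; right; right; right
    calc C + C = C + (B + A) := by rw [← hC]
    _ = A + B + C := by abel
  · right; right; right; left
    calc A + B + C + C = (A + C) + (B + C) := by abel
    _ = B + A := by rw [hAC, hBC]
    _ = C := by rw [← hC]

lemma cover3 (a b c : ℕ) :
    IsFive (cls 3 (a • Pi.single (0 : ZMod 3) 1 + b • Pi.single 1 1 + c • Pi.single 2 1)) := by
  induction c with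
  | succ c ih => rw [succ_nsmul, ← add_assoc]; exact stepC ih
  | zero =>
    rw [zero_nsmul, add_zero]
    induction b with
    | succ b ih => rw [succ_nsmul, ← add_assoc]; exact stepB ih
    | zero =>
      rw [zero_nsmul, add_zero]
      induction a with
      | succ a ih => rw [succ_nsmul]; exact stepA ih
      | zero => rw [zero_nsmul]; exact Or.inl rfl

lemma cover (x : ZMod 3 → ℕ) : IsFive (cls 3 x) := by
  have hx : x = x 0 • Pi.single (0 : ZMod 3) 1 + x 1 • Pi.single 1 1 + x 2 • Pi.single 2 1 := by
    funext j; rcases (by decide : ∀ j : ZMod 3, j = 0 ∨ j = 1 ∨ j = 2) j with rfl | rfl | rfl <;> simp only [Pi.add_apply, Pi.smul_apply, smul_eq_mul, Pi.single_apply] <;> simp (config := { decide := true })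
  have h := cover3 (x 0) (x 1) (x 2)
  rwa [← hx] at h

lemma ne_cls {x y : ZMod 3 → ℕ} (h : ¬ Dcon x y) : cls 3 x ≠ cls 3 y :=
  fun e => h (graphCon_le_Dcon ((AddCon.eq _).mp e))


lemma neh3 {y : ZMod 3 → ℕ} (j : ZMod 3) (hy : y j ≠ 0) : cls 3 0 ≠ cls 3 y :=
  ne_cls (fun ⟨_, _, h3⟩ => hy (congrFun (h3.mp rfl) j))

theorem graphMonoid_three_description :
    (∀ z : graphMonoid 3,
      z = cls 3 0 ∨ z = cls 3 (Pi.single 0 1) ∨ z = cls 3 (Pi.single 1 1) ∨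
      z = cls 3 (Pi.single 2 1) ∨
      z = cls 3 (Pi.single 0 1 + Pi.single 1 1 + Pi.single 2 1)) ∧
    List.Pairwise (· ≠ ·)
      [cls 3 0, cls 3 (Pi.single 0 1), cls 3 (Pi.single 1 1), cls 3 (Pi.single 2 1),
       cls 3 (Pi.single 0 1 + Pi.single 1 1 + Pi.single 2 1)] := by
  constructor
  · intro z
    induction z using AddCon.induction_on with
    | H x => exact cover x
  · have n01 : cls 3 0 ≠ cls 3 (Pi.single 0 1) := neh3 0 (by simp)
    have n02 : cls 3 0 ≠ cls 3 (Pi.single 1 1) := neh3 1 (by simp)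
    have n03 : cls 3 0 ≠ cls 3 (Pi.single 2 1) := neh3 2 (by simp)
    have n04 : cls 3 0 ≠ cls 3 (Pi.single 0 1 + Pi.single 1 1 + Pi.single 2 1) :=
      neh3 0 (by simp [Pi.single_apply])
    have n12 : cls 3 (Pi.single 0 1) ≠ cls 3 (Pi.single 1 1) :=
      ne_cls (fun ⟨h1, _, _⟩ => absurd h1 (by decide))
    have n13 : cls 3 (Pi.single 0 1) ≠ cls 3 (Pi.single 2 1) :=
      ne_cls (fun ⟨_, h2, _⟩ => absurd h2 (by decide))
    have n14 : cls 3 (Pi.single 0 1) ≠ cls 3 (Pi.single 0 1 + Pi.single 1 1 + Pi.single 2 1) :=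
      ne_cls (fun ⟨h1, _, _⟩ => absurd h1 (by decide))
    have n23 : cls 3 (Pi.single 1 1) ≠ cls 3 (Pi.single 2 1) :=
      ne_cls (fun ⟨h1, _, _⟩ => absurd h1 (by decide))
    have n24 : cls 3 (Pi.single 1 1) ≠ cls 3 (Pi.single 0 1 + Pi.single 1 1 + Pi.single 2 1) :=
      ne_cls (fun ⟨_, h2, _⟩ => absurd h2 (by decide))
    have n34 : cls 3 (Pi.single 2 1) ≠ cls 3 (Pi.single 0 1 + Pi.single 1 1 + Pi.single 2 1) :=
      ne_cls (fun ⟨h1, _, _⟩ => absurd h1 (by decide))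
    simp only [List.pairwise_cons, List.mem_cons, List.not_mem_nil, or_false,
      forall_eq_or_imp, forall_eq, ne_eq, List.Pairwise.nil, and_true]
    tauto

end
end
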